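/- arXiv:1808.09181 — 4 statements merged into one kernel-verified Lean document; each statement's English description precedes it below -/
import Mathlib

section
/- Let $(a_k)_{0\le k\le n}$, $(\zeta_k)_{0\le k\le n}$, $(\xi_k)_{0\le k\le n}$ be adapted processes on a filtered probability space $(\Omega,\mathcal G,(\mathcal G_k)_{0\le k\le n},\mathbb P)$ such that (i) $a_0=0$ and $a_k\ge 0$ for all $k$; (ii) $\mathbb E[\xi_{k+1}\mid \mathcal G_k]=0$ for all $0\le k\le n-1$; (iii) $a_{k+1}\le q a_k+\zeta_k+\xi_{k+1}$ for all $0\le k\le n-1$ with some $q>1$; (iv) $\sup_{0\le k\le n}\mathbb E[|\zeta_k|]\le \varepsilon$. Then for any stopping time $\tau\le n$, $\mathbb E[a_\tau]\le \varepsilon q^n/(q-1)$. -/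
open MeasureTheory ProbabilityTheory

theorem stopped_error_bound {Ω : Type*} {m : MeasurableSpace Ω} {μ : Measure Ω}
    [IsProbabilityMeasure μ] (n : ℕ) (𝒢 : Filtration ℕ m)
    (a ζ ξ : ℕ → Ω → ℝ)
    (ha : Adapted 𝒢 a) (hζ : Adapted 𝒢 ζ) (hξ : Adapted 𝒢 ξ)
    (ha_int : ∀ k ≤ n, Integrable (a k) μ)
    (hζ_int : ∀ k ≤ n, Integrable (ζ k) μ)
    (hξ_int : ∀ k ≤ n, Integrable (ξ k) μ)
    (h0 : ∀ᵐ ω ∂μ, a 0 ω = 0)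
    (hpos : ∀ k ≤ n, ∀ᵐ ω ∂μ, 0 ≤ a k ω)
    (hcond : ∀ k < n, μ[ξ (k + 1) | 𝒢 k] =ᵐ[μ] 0)
    (q : ℝ) (hq : 1 < q)
    (hrec : ∀ k < n, ∀ᵐ ω ∂μ, a (k + 1) ω ≤ q * a k ω + ζ k ω + ξ (k + 1) ω)
    (ε : ℝ) (hε : 0 < ε)
    (hζε : ∀ k ≤ n, ∫ ω, |ζ k ω| ∂μ ≤ ε)
    (τ : Ω → ℕ) (hτ : IsStoppingTime 𝒢 (fun ω => (τ ω : WithTop ℕ))) (hτn : ∀ ω, τ ω ≤ n) :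
    ∫ ω, a (τ ω) ω ∂μ ≤ ε * q ^ n / (q - 1) := by
  have hq0 : (0:ℝ) < q - 1 := by linarith
  -- extended process, integrable for all indices
  set a' : ℕ → Ω → ℝ := fun k => a (min k n) with ha'def
  have ha'_int : ∀ k, Integrable (a' k) μ := fun k => ha_int _ (min_le_right _ _)
  -- the stopped values
  set v : ℕ → Ω → ℝ := fun m ω => a' (min (τ ω) m) ω with hvdef
  have hτm : ∀ m : ℕ, IsStoppingTime 𝒢 (fun ω => ((min (τ ω) m : ℕ) : WithTop ℕ)) :=
    fun m i => by have h := hτ.min_const m i; convert h using 2 with ω; simp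
  have hv_int : ∀ m, Integrable (v m) μ := by
    intro m
    have : Integrable (stoppedValue a' (fun ω => ((min (τ ω) m : ℕ) : WithTop ℕ))) μ :=
      integrable_stoppedValue ℕ (hτm m) ha'_int (fun ω => WithTop.coe_le_coe.mpr (min_le_right _ m))
    exact this
  -- a.e. nonnegativity of all a k, k ≤ n, simultaneously
  have hpos' : ∀ᵐ ω ∂μ, ∀ k, k ≤ n → 0 ≤ a k ω := by
    rw [MeasureTheory.ae_all_iff]
    intro k
    by_cases hk : k ≤ n
    · exact (hpos k hk).mono fun ω h _ => h
    · filter_upwards with ω h; exact absurd h hk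
  have hv_nonneg : ∀ m, 0 ≤ᵐ[μ] v m := by
    intro m
    filter_upwards [hpos'] with ω h
    exact h _ (min_le_right _ _)
  -- key recursion
  have key : ∀ m, m < n → ∫ ω, v (m+1) ω ∂μ ≤ q * ∫ ω, v m ω ∂μ + ε := by
    intro m hm
    set S : Set Ω := {ω | m < τ ω} with hSdef
    have hSmeas𝒢 : MeasurableSet[𝒢 m] S := by
      have hcompl := (hτ m).compl
      have hSeq : S = {ω | (τ ω : WithTop ℕ) ≤ m}ᶜ := by
        ext ω; simp [hSdef, not_le]
      rw [hSeq]; exact hcompl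
    have hSmeas : MeasurableSet S := 𝒢.le m S hSmeas𝒢
    -- decomposition
    have hdecomp : ∀ ω, v (m+1) ω = v m ω + S.indicator (fun ω => a (m+1) ω - a m ω) ω := by
      intro ω
      by_cases hω : m < τ ω
      · have h1 : min (τ ω) (m+1) = m+1 := min_eq_right (by omega)
        have h2 : min (τ ω) m = m := min_eq_right (by omega)
        have h3 : min (m+1) n = m+1 := min_eq_left (by omega)
        have h4 : min m n = m := min_eq_left (by omega)
        have hωS : ω ∈ S := hω
        simp only [hvdef, ha'def, h1, h2, h3, h4, Set.indicator_of_mem hωS]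
        ring
      · have h1 : min (τ ω) (m+1) = τ ω := min_eq_left (by omega)
        have h2 : min (τ ω) m = τ ω := min_eq_left (by omega)
        have hωS : ω ∉ S := hω
        simp only [hvdef, ha'def, h1, h2, Set.indicator_of_notMem hωS, add_zero]
    have hint_am : Integrable (a m) μ := ha_int m (by omega)
    have hint_am1 : Integrable (a (m+1)) μ := ha_int (m+1) (by omega)
    have hint_ζ : Integrable (ζ m) μ := hζ_int m (by omega)
    have hint_ξ : Integrable (ξ (m+1)) μ := hξ_int (m+1) (by omega)
    have hIeq : ∫ ω, v (m+1) ω ∂μ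
        = ∫ ω, v m ω ∂μ + ((∫ ω in S, a (m+1) ω ∂μ) - ∫ ω in S, a m ω ∂μ) := by
      have hind : Integrable (S.indicator (fun ω => a (m+1) ω - a m ω)) μ :=
        ((hint_am1.sub hint_am).indicator hSmeas)
      calc ∫ ω, v (m+1) ω ∂μ
          = ∫ ω, (v m ω + S.indicator (fun ω => a (m+1) ω - a m ω) ω) ∂μ :=
            integral_congr_ae (Filter.Eventually.of_forall hdecomp)
        _ = ∫ ω, v m ω ∂μ + ∫ ω, S.indicator (fun ω => a (m+1) ω - a m ω) ω ∂μ :=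
            integral_add (hv_int m) hind
        _ = ∫ ω, v m ω ∂μ + ((∫ ω in S, a (m+1) ω ∂μ) - ∫ ω in S, a m ω ∂μ) := by
            rw [integral_indicator hSmeas,
              integral_sub hint_am1.integrableOn hint_am.integrableOn]
    -- the ξ term vanishes
    have hξ0 : ∫ ω in S, ξ (m+1) ω ∂μ = 0 := by
      rw [← setIntegral_condExp (𝒢.le m) hint_ξ hSmeas𝒢,
        setIntegral_congr_ae hSmeas ((hcond m hm).mono fun ω h _ => h)]
      simp
    -- the ζ term is at most ε
    have hζbound : ∫ ω in S, ζ m ω ∂μ ≤ ε := by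
      calc ∫ ω in S, ζ m ω ∂μ ≤ ∫ ω in S, |ζ m ω| ∂μ :=
            integral_mono_ae hint_ζ.integrableOn hint_ζ.abs.integrableOn
              (Filter.Eventually.of_forall fun ω => le_abs_self _)
        _ ≤ ∫ ω, |ζ m ω| ∂μ :=
            setIntegral_le_integral hint_ζ.abs (Filter.Eventually.of_forall fun ω => abs_nonneg _)
        _ ≤ ε := hζε m (by omega)
    -- bound ∫_S a (m+1)
    have hstep : ∫ ω in S, a (m+1) ω ∂μ
        ≤ ∫ ω in S, (q * a m ω + ζ m ω + ξ (m+1) ω) ∂μ :=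
      integral_mono_ae hint_am1.integrableOn
        ((((hint_am.const_mul q).add hint_ζ).add hint_ξ).integrableOn)
        (ae_restrict_of_ae (hrec m hm))
    have h1int : Integrable (fun ω => q * a m ω) μ := hint_am.const_mul q
    have h12int : Integrable (fun ω => q * a m ω + ζ m ω) μ := h1int.add hint_ζ
    have hsplit : ∫ ω in S, (q * a m ω + ζ m ω + ξ (m+1) ω) ∂μ
        = q * (∫ ω in S, a m ω ∂μ) + (∫ ω in S, ζ m ω ∂μ) + ∫ ω in S, ξ (m+1) ω ∂μ := by
      calc ∫ ω in S, (q * a m ω + ζ m ω + ξ (m+1) ω) ∂μ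
          = (∫ ω in S, (q * a m ω + ζ m ω) ∂μ) + ∫ ω in S, ξ (m+1) ω ∂μ :=
            integral_add h12int.integrableOn hint_ξ.integrableOn
        _ = ((∫ ω in S, q * a m ω ∂μ) + ∫ ω in S, ζ m ω ∂μ) + ∫ ω in S, ξ (m+1) ω ∂μ := by
            rw [integral_add h1int.integrableOn hint_ζ.integrableOn]
        _ = q * (∫ ω in S, a m ω ∂μ) + (∫ ω in S, ζ m ω ∂μ) + ∫ ω in S, ξ (m+1) ω ∂μ := by
            rw [integral_const_mul]
    -- ∫_S a m ≤ ∫ v m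
    have hSam_le : ∫ ω in S, a m ω ∂μ ≤ ∫ ω, v m ω ∂μ := by
      have heq : ∫ ω in S, a m ω ∂μ = ∫ ω in S, v m ω ∂μ := by
        refine setIntegral_congr_fun hSmeas fun ω hω => ?_
        have h2 : min (τ ω) m = m := min_eq_right (by exact le_of_lt hω)
        have h4 : min m n = m := min_eq_left (by omega)
        simp only [hvdef, ha'def, h2, h4]
      rw [heq]
      exact setIntegral_le_integral (hv_int m) (hv_nonneg m)
    have hSam_nonneg : 0 ≤ ∫ ω in S, a m ω ∂μ := by
      apply integral_nonneg_of_ae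
      exact ae_restrict_of_ae (hpos m (by omega))
    have hmul : (q - 1) * (∫ ω in S, a m ω ∂μ) ≤ (q - 1) * ∫ ω, v m ω ∂μ :=
      mul_le_mul_of_nonneg_left hSam_le (le_of_lt hq0)
    nlinarith [hIeq, hstep, hsplit, hξ0, hζbound]
  -- induction
  have main : ∀ m, m ≤ n → ∫ ω, v m ω ∂μ ≤ ε * ∑ i ∈ Finset.range m, q ^ i := by
    intro m
    induction m with
    | zero =>
      intro _
      have hv0 : v 0 =ᵐ[μ] 0 := by
        filter_upwards [h0] with ω h
        show a' (min (τ ω) 0) ω = 0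
        simp [ha'def, h]
      have hz : ∫ ω, v 0 ω ∂μ = 0 := by
        rw [integral_congr_ae hv0]; simp
      rw [hz]; simp
    | succ m ih =>
      intro hm1
      have hm : m < n := by omega
      have ihm := ih (by omega)
      have hkey := key m hm
      have hq1 : (0:ℝ) ≤ q := by linarith
      have : q * ∫ ω, v m ω ∂μ ≤ q * (ε * ∑ i ∈ Finset.range m, q ^ i) :=
        mul_le_mul_of_nonneg_left ihm hq1
      calc ∫ ω, v (m+1) ω ∂μ ≤ q * ∫ ω, v m ω ∂μ + ε := hkey
        _ ≤ q * (ε * ∑ i ∈ Finset.range m, q ^ i) + ε := by linarith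
        _ = ε * ∑ i ∈ Finset.range (m+1), q ^ i := by
            rw [geom_sum_succ]; ring
  -- conclude
  have hvn : ∫ ω, a (τ ω) ω ∂μ = ∫ ω, v n ω ∂μ := by
    refine integral_congr_ae (Filter.Eventually.of_forall fun ω => ?_)
    have h1 : min (τ ω) n = τ ω := min_eq_left (hτn ω)
    simp only [hvdef, ha'def, h1]
  have hsum : (∑ i ∈ Finset.range n, q ^ i) = (q ^ n - 1) / (q - 1) :=
    geom_sum_eq (ne_of_gt hq) n
  have hfin : ε * ((q ^ n - 1) / (q - 1)) ≤ ε * q ^ n / (q - 1) := by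
    rw [mul_div_assoc]
    gcongr <;> linarith
  calc ∫ ω, a (τ ω) ω ∂μ = ∫ ω, v n ω ∂μ := hvn
    _ ≤ ε * ∑ i ∈ Finset.range n, q ^ i := main n le_rfl
    _ = ε * ((q ^ n - 1) / (q - 1)) := by rw [hsum]
    _ ≤ ε * q ^ n / (q - 1) := hfin
end

section
/- Let $d\ge 1$, let $\gamma_{ij}=\gamma_{ji}\ge 0$ for $i\ne j$, and let $x=(x_1,\dots,x_d)$, $y=(y_1,\dots,y_d)$ both lie in the Weyl chamber $\Delta_d=\{z\in\mathbb R^d: z_1<z_2<\dots<z_d\}$. Then $\sum_{i=1}^d\sum_{j\ne i} (x_i-y_i)\Big(\frac{\gamma_{ij}}{x_i-x_j}-\frac{\gamma_{ij}}{y_i-y_j}\Big) \le 0$. -/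
theorem weyl_chamber_interaction_nonpos (d : ℕ) (hd : 1 ≤ d)
    (γ : Fin d → Fin d → ℝ) (hsym : ∀ i j, γ i j = γ j i)
    (hnn : ∀ i j, i ≠ j → 0 ≤ γ i j)
    (x y : Fin d → ℝ) (hx : StrictMono x) (hy : StrictMono y) :
    ∑ i, ∑ j ∈ Finset.univ.erase i,
      (x i - y i) * (γ i j / (x i - x j) - γ i j / (y i - y j)) ≤ 0 := by
  set f : Fin d → Fin d → ℝ :=
    fun i j => (x i - y i) * (γ i j / (x i - x j) - γ i j / (y i - y j)) with hf
  have hswap : ∑ i, ∑ j ∈ Finset.univ.erase i, f i j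
      = ∑ i, ∑ j ∈ Finset.univ.erase i, f j i := by
    rw [Finset.sum_comm' (t' := Finset.univ) (s' := fun j => Finset.univ.erase j)]
    intro i j
    simp [and_comm, ne_comm, eq_comm]
  have hpair : ∀ i j : Fin d, i ≠ j → f i j + f j i ≤ 0 := by
    intro i j hij
    have ha : 0 < (x i - x j) * (y i - y j) := by
      rcases lt_or_gt_of_ne hij with h | h
      · have h1 := hx h; have h2 := hy h
        have : x i - x j < 0 := by linarith
        have : y i - y j < 0 := by linarith
        nlinarith
      · have h1 := hx h; have h2 := hy h
        nlinarith
    have hxne : x i - x j ≠ 0 := by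
      intro h; rw [h, zero_mul] at ha; exact lt_irrefl _ ha
    have hyne : y i - y j ≠ 0 := by
      intro h; rw [h, mul_zero] at ha; exact lt_irrefl _ ha
    have key : f i j + f j i
        = -(γ i j * ((x i - x j) - (y i - y j))^2 / ((x i - x j) * (y i - y j))) := by
      simp only [hf]
      rw [hsym j i]
      have hxne' : x j - x i ≠ 0 := by intro h; apply hxne; linarith [sub_eq_zero.mp h]
      have hyne' : y j - y i ≠ 0 := by intro h; apply hyne; linarith [sub_eq_zero.mp h]
      field_simp
      ring
    rw [key]
    have := hnn i j hij
    have : 0 ≤ γ i j * ((x i - x j) - (y i - y j))^2 / ((x i - x j) * (y i - y j)) := by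
      positivity
    linarith
  have h2 : ∑ i, ∑ j ∈ Finset.univ.erase i, (f i j + f j i) ≤ 0 := by
    apply Finset.sum_nonpos
    intro i _
    apply Finset.sum_nonpos
    intro j hj
    exact hpair i j (Finset.ne_of_mem_erase hj).symm
  have hsum : ∑ i, ∑ j ∈ Finset.univ.erase i, (f i j + f j i)
      = ∑ i, ∑ j ∈ Finset.univ.erase i, f i j
        + ∑ i, ∑ j ∈ Finset.univ.erase i, f j i := by
    simp [Finset.sum_add_distrib]
  have : 2 * ∑ i, ∑ j ∈ Finset.univ.erase i, f i j ≤ 0 := by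
    rw [← hswap] at hsum
    linarith [h2, hsum]
  linarith
end

section
/- Let $d\ge 1$, $h>0$, $\gamma_{ij}=\gamma_{ji}\ge 0$, and suppose $X, X^{(n)}\in\Delta_d$, $e_i = X_i - X_i^{(n)}$, and for each $i$ the identity $e_i = f_i + \sum_{j\ne i}\Big(\frac{\gamma_{ij}}{X_i-X_j}-\frac{\gamma_{ij}}{X^{(n)}_i-X^{(n)}_j}\Big) h$ holds for some reals $f_i$. Then $\sum_{i=1}^d e_i^2 \le \sum_{i=1}^d f_i^2$. -/
lemma pair_nonpos (γ a b : ℝ) (hγ : 0 ≤ γ) (hab : 0 < a * b) :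
    (a - b) * (γ / a - γ / b) ≤ 0 := by
  have ha : a ≠ 0 := fun h => by simp [h] at hab
  have hb : b ≠ 0 := fun h => by simp [h] at hab
  have key : (a - b) * (γ / a - γ / b) = -(γ * (a - b) ^ 2 / (a * b)) := by
    field_simp; ring
  rw [key, neg_nonpos]
  exact div_nonneg (mul_nonneg hγ (sq_nonneg _)) hab.le

theorem implicit_step_error_contraction (d : ℕ) (hd : 1 ≤ d) (h : ℝ) (hh : 0 < h)
    (γ : Fin d → Fin d → ℝ) (hsym : ∀ i j, γ i j = γ j i)
    (hnn : ∀ i j, i ≠ j → 0 ≤ γ i j)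
    (X Xn : Fin d → ℝ) (hX : StrictMono X) (hXn : StrictMono Xn)
    (e f : Fin d → ℝ) (he : ∀ i, e i = X i - Xn i)
    (hid : ∀ i, e i = f i +
      (∑ j ∈ Finset.univ.erase i, (γ i j / (X i - X j) - γ i j / (Xn i - Xn j))) * h) :
    ∑ i, (e i) ^ 2 ≤ ∑ i, (f i) ^ 2 := by
  set S : Fin d → ℝ := fun i =>
    ∑ j ∈ Finset.univ.erase i, (γ i j / (X i - X j) - γ i j / (Xn i - Xn j)) with hS
  have hf : ∀ i, f i = e i - S i * h := by
    intro i; have := hid i; simp only [hS]; linarith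
  set g : Fin d → Fin d → ℝ := fun i j =>
    e i * (γ i j / (X i - X j) - γ i j / (Xn i - Xn j)) with hg
  -- pair bound
  have hpair : ∀ i j : Fin d, i ≠ j → g i j + g j i ≤ 0 := by
    intro i j hij
    have hab : 0 < (X i - X j) * (Xn i - Xn j) := by
      rcases lt_or_gt_of_ne hij with hlt | hlt
      · exact mul_pos_of_neg_of_neg (sub_neg.2 (hX hlt)) (sub_neg.2 (hXn hlt))
      · exact mul_pos (sub_pos.2 (hX hlt)) (sub_pos.2 (hXn hlt))
    have hγ := hnn i j hij
    have heq : g i j + g j i =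
        ((X i - X j) - (Xn i - Xn j)) * (γ i j / (X i - X j) - γ i j / (Xn i - Xn j)) := by
      simp only [hg, he, hsym j i]
      have hXji : X j - X i = -(X i - X j) := by ring
      have hXnji : Xn j - Xn i = -(Xn i - Xn j) := by ring
      rw [hXji, hXnji, div_neg, div_neg]
      ring
    rw [heq]
    exact pair_nonpos _ _ _ hγ hab
  -- T ≤ 0
  set T : ℝ := ∑ i, e i * S i with hT
  have hrw : T = ∑ i, ∑ j, (if j ≠ i then g i j else 0) := by
    apply Finset.sum_congr rfl
    intro i _
    rw [hS, Finset.mul_sum, ← Finset.filter_ne', Finset.sum_filter]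
  have hrw2 : T = ∑ i, ∑ j, (if i ≠ j then g j i else 0) := by
    rw [hrw]
    exact Finset.sum_comm
  have hTT : T + T ≤ 0 := by
    have hsum : T + T =
        ∑ i, ∑ j, ((if j ≠ i then g i j else 0) + (if i ≠ j then g j i else 0)) := by
      nth_rewrite 1 [hrw]
      rw [hrw2, ← Finset.sum_add_distrib]
      exact Finset.sum_congr rfl fun i _ => (Finset.sum_add_distrib).symm
    rw [hsum]
    apply Finset.sum_nonpos
    intro i _
    apply Finset.sum_nonpos
    intro j _
    by_cases hij : i = j
    · simp [hij]
    · have hji : j ≠ i := fun hh' => hij hh'.symm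
      simp only [if_pos hji, if_pos hij]
      exact hpair i j hij
  have hTle : T ≤ 0 := by linarith
  -- expand
  have hQ : (0:ℝ) ≤ ∑ i, S i ^ 2 := Finset.sum_nonneg fun i _ => sq_nonneg _
  have expand : ∑ i, f i ^ 2 = ∑ i, e i ^ 2 - 2 * h * T + h ^ 2 * ∑ i, S i ^ 2 := by
    rw [hT, Finset.mul_sum, Finset.mul_sum, ← Finset.sum_sub_distrib, ← Finset.sum_add_distrib]
    exact Finset.sum_congr rfl fun i _ => by rw [hf i]; ring
  have h1 : 0 ≤ 2 * h * (-T) := mul_nonneg (by linarith) (by linarith)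
  have h2 : 0 ≤ h ^ 2 * ∑ i, S i ^ 2 := mul_nonneg (sq_nonneg h) hQ
  rw [expand]
  linarith
end

section
/- Let $(Y_k)_{0\le k\le n}$ be nonnegative random variables and suppose there are constants $C>0$ such that for every stopping time $\tau$ (with respect to a discrete filtration, taking values in $\{0,\dots,n\}$), $\mathbb E[Y_\tau]\le C$. Then for every $p\in(0,1)$, $\mathbb E\big[\max_{0\le k\le n} Y_k^{\,p}\big] \le \frac{C^p}{1-p}$. -/
open MeasureTheory

theorem lenglart_domination_discrete {Ω : Type*} {m : MeasurableSpace Ω} {μ : Measure Ω}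
    [IsProbabilityMeasure μ] (n : ℕ) (𝒢 : Filtration ℕ m)
    (Y : ℕ → Ω → ℝ) (hadapt : Adapted 𝒢 Y)
    (hnn : ∀ k ω, 0 ≤ Y k ω) (hint : ∀ k ≤ n, Integrable (Y k) μ)
    (C : ℝ) (hC : 0 < C)
    (hbound : ∀ τ : Ω → ℕ, IsStoppingTime 𝒢 (fun ω => (τ ω : WithTop ℕ)) → (∀ ω, τ ω ≤ n) →
      ∫ ω, Y (τ ω) ω ∂μ ≤ C)
    (p : ℝ) (hp0 : 0 < p) (hp1 : p < 1) :
    ∫ ω, (⨆ k : Fin (n + 1), Y k ω) ^ p ∂μ ≤ C ^ p / (1 - p) := by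
  set M : Ω → ℝ := fun ω => ⨆ k : Fin (n + 1), Y k ω with hMdef
  have hYm : ∀ k, Measurable (Y k) := fun k =>
    (hadapt k).mono (𝒢.le k) le_rfl
  have hbddA : ∀ ω, BddAbove (Set.range fun k : Fin (n + 1) => Y k ω) := fun ω =>
    (Set.finite_range _).bddAbove
  have hMnn : ∀ ω, 0 ≤ M ω := fun ω =>
    (hnn 0 ω).trans (le_ciSup (hbddA ω) (0 : Fin (n + 1)))
  have hMlt : ∀ (t : ℝ) (ω : Ω), t < M ω ↔ ∃ k : Fin (n + 1), t < Y k ω := fun t ω =>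
    lt_ciSup_iff (hbddA ω)
  have hMmeas : Measurable M := by
    have h1 : Measurable (Finset.univ.sup' Finset.univ_nonempty
        (fun k : Fin (n + 1) => Y ↑k)) :=
      Finset.measurable_sup' _ (fun i _ => hYm i)
    have h2 : (Finset.univ.sup' Finset.univ_nonempty (fun k : Fin (n + 1) => Y ↑k)) = M := by
      funext ω
      rw [Finset.sup'_apply, Finset.sup'_univ_eq_ciSup]
    rwa [h2] at h1
  -- tail bound
  have tail : ∀ t : ℝ, 0 < t → μ {ω | t < M ω} ≤ ENNReal.ofReal (C / t) := by
    intro t ht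
    set τ : Ω → ℕ := hittingBtwn Y (Set.Ioi t) 0 n with hτdef
    have hτ : IsStoppingTime 𝒢 (fun ω => (τ ω : WithTop ℕ)) := hittingBtwn_isStoppingTime hadapt measurableSet_Ioi
    have hτn : ∀ ω, τ ω ≤ n := fun ω => hittingBtwn_le ω
    have hτint : Integrable (fun ω => Y (τ ω) ω) μ := by
      have h := integrable_stoppedValue ℕ hτ
        (u := fun k => Y (min k n)) (fun k => hint (min k n) (min_le_right _ _)) (N := n) (fun ω => WithTop.coe_le_coe.mpr (hτn ω))
      have : stoppedValue (fun k => Y (min k n)) (fun ω => (τ ω : WithTop ℕ)) = fun ω => Y (τ ω) ω := by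
        funext ω
        show Y (min (τ ω) n) ω = Y (τ ω) ω; rw [min_eq_left (hτn ω)]
      rwa [this] at h
    have hA : MeasurableSet {ω | t < M ω} := measurableSet_lt measurable_const hMmeas
    have key : ∀ ω ∈ {ω | t < M ω}, t ≤ Y (τ ω) ω := by
      intro ω hω
      obtain ⟨k, hk⟩ := (hMlt t ω).1 hω
      have hmem : Y (τ ω) ω ∈ Set.Ioi t :=
        hittingBtwn_mem_set ⟨(k : ℕ), ⟨Nat.zero_le _, Nat.lt_succ_iff.mp k.isLt⟩, hk⟩
      exact le_of_lt hmem
    have h1 : t * (μ {ω | t < M ω}).toReal ≤ ∫ ω in {ω | t < M ω}, Y (τ ω) ω ∂μ :=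
      setIntegral_ge_of_const_le_real hA (measure_ne_top μ _) key hτint.integrableOn
    have h2 : ∫ ω in {ω | t < M ω}, Y (τ ω) ω ∂μ ≤ ∫ ω, Y (τ ω) ω ∂μ :=
      setIntegral_le_integral hτint (ae_of_all _ fun ω => hnn _ ω)
    have h3 := hbound τ hτ hτn
    have h4 : (μ {ω | t < M ω}).toReal ≤ C / t := by
      rw [le_div_iff₀ ht]
      nlinarith [h1, h2, h3]
    calc μ {ω | t < M ω} = ENNReal.ofReal (μ {ω | t < M ω}).toReal :=
          (ENNReal.ofReal_toReal (measure_ne_top μ _)).symm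
      _ ≤ ENNReal.ofReal (C / t) := ENNReal.ofReal_le_ofReal h4
  -- layer cake
  have lay := lintegral_rpow_eq_lintegral_meas_lt_mul μ (ae_of_all μ hMnn)
    hMmeas.aemeasurable hp0
  have hp1' : (0:ℝ) < 1 - p := by linarith
  -- bound on (0, C]
  have bound1 : ∫⁻ t in Set.Ioc 0 C, μ {a | t < M a} * ENNReal.ofReal (t ^ (p - 1)) ≤
      ENNReal.ofReal (C ^ p / p) := by
    have hInt : IntegrableOn (fun t : ℝ => t ^ (p - 1)) (Set.Ioc 0 C) := by
      have := intervalIntegral.intervalIntegrable_rpow' (a := 0) (b := C)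
        (r := p - 1) (by linarith)
      rwa [intervalIntegrable_iff_integrableOn_Ioc_of_le hC.le] at this
    have hnn' : 0 ≤ᵐ[volume.restrict (Set.Ioc 0 C)] fun t : ℝ => t ^ (p - 1) := by
      filter_upwards [ae_restrict_mem measurableSet_Ioc] with t ht
      exact Real.rpow_nonneg ht.1.le _
    calc ∫⁻ t in Set.Ioc 0 C, μ {a | t < M a} * ENNReal.ofReal (t ^ (p - 1))
        ≤ ∫⁻ t in Set.Ioc 0 C, 1 * ENNReal.ofReal (t ^ (p - 1)) :=
          lintegral_mono fun t => mul_le_mul_left prob_le_one _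
      _ = ∫⁻ t in Set.Ioc 0 C, ENNReal.ofReal (t ^ (p - 1)) := by simp
      _ = ENNReal.ofReal (∫ t in Set.Ioc 0 C, t ^ (p - 1)) :=
          (ofReal_integral_eq_lintegral_ofReal hInt hnn').symm
      _ = ENNReal.ofReal (C ^ p / p) := by
          rw [← intervalIntegral.integral_of_le hC.le,
            integral_rpow (Or.inl (by linarith : (-1:ℝ) < p - 1))]
          rw [sub_add_cancel, Real.zero_rpow hp0.ne', sub_zero]
  -- bound on (C, ∞)
  have bound2 : ∫⁻ t in Set.Ioi C, μ {a | t < M a} * ENNReal.ofReal (t ^ (p - 1)) ≤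
      ENNReal.ofReal (C ^ p / (1 - p)) := by
    have hInt : IntegrableOn (fun t : ℝ => C * t ^ (p - 2)) (Set.Ioi C) :=
      (integrableOn_Ioi_rpow_of_lt (by linarith) hC).const_mul C
    have hnn' : 0 ≤ᵐ[volume.restrict (Set.Ioi C)] fun t : ℝ => C * t ^ (p - 2) := by
      filter_upwards [ae_restrict_mem measurableSet_Ioi] with t ht
      exact mul_nonneg hC.le (Real.rpow_nonneg (hC.trans ht).le _)
    calc ∫⁻ t in Set.Ioi C, μ {a | t < M a} * ENNReal.ofReal (t ^ (p - 1))
        ≤ ∫⁻ t in Set.Ioi C, ENNReal.ofReal (C * t ^ (p - 2)) := by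
          refine lintegral_mono_ae ?_
          filter_upwards [ae_restrict_mem measurableSet_Ioi] with t ht
          have htpos : (0:ℝ) < t := hC.trans ht
          have h1 : μ {a | t < M a} ≤ ENNReal.ofReal (C / t) := tail t htpos
          calc μ {a | t < M a} * ENNReal.ofReal (t ^ (p - 1))
              ≤ ENNReal.ofReal (C / t) * ENNReal.ofReal (t ^ (p - 1)) :=
                mul_le_mul_left h1 _
            _ = ENNReal.ofReal (C / t * t ^ (p - 1)) :=
                (ENNReal.ofReal_mul (div_nonneg hC.le htpos.le)).symm
            _ = ENNReal.ofReal (C * t ^ (p - 2)) := by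
                congr 1
                rw [div_mul_eq_mul_div, mul_div_assoc]
                congr 1
                have h := Real.rpow_sub htpos (p - 1) 1
                rw [Real.rpow_one] at h
                rw [show p - 2 = p - 1 - 1 by ring, h]
      _ = ENNReal.ofReal (∫ t in Set.Ioi C, C * t ^ (p - 2)) :=
          (ofReal_integral_eq_lintegral_ofReal hInt hnn').symm
      _ = ENNReal.ofReal (C ^ p / (1 - p)) := by
          rw [MeasureTheory.integral_const_mul, integral_Ioi_rpow_of_lt (by linarith) hC]
          congr 1
          have hCp : C * C ^ (p - 1) = C ^ p := by
            have h := (Real.rpow_add hC 1 (p - 1)).symm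
            rw [Real.rpow_one] at h
            rw [show (1:ℝ) + (p - 1) = p by ring] at h
            exact h
          have h21 : p - 2 + 1 = p - 1 := by ring
          rw [h21, ← hCp]
          have hne : p - 1 ≠ 0 := by linarith
          have hne2 : (1:ℝ) - p ≠ 0 := by linarith
          field_simp
          ring
  -- combine
  have split : ∫⁻ t in Set.Ioi (0:ℝ), μ {a | t < M a} * ENNReal.ofReal (t ^ (p - 1)) =
      (∫⁻ t in Set.Ioc 0 C, μ {a | t < M a} * ENNReal.ofReal (t ^ (p - 1))) +
      ∫⁻ t in Set.Ioi C, μ {a | t < M a} * ENNReal.ofReal (t ^ (p - 1)) := by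
    rw [← Set.Ioc_union_Ioi_eq_Ioi hC.le,
      lintegral_union measurableSet_Ioi (Set.Ioc_disjoint_Ioi le_rfl)]
  have lfin : ∫⁻ ω, ENNReal.ofReal (M ω ^ p) ∂μ ≤ ENNReal.ofReal (C ^ p / (1 - p)) := by
    rw [lay, split]
    calc ENNReal.ofReal p * ((∫⁻ t in Set.Ioc 0 C, μ {a | t < M a} *
            ENNReal.ofReal (t ^ (p - 1))) +
          ∫⁻ t in Set.Ioi C, μ {a | t < M a} * ENNReal.ofReal (t ^ (p - 1)))
        ≤ ENNReal.ofReal p * (ENNReal.ofReal (C ^ p / p) + ENNReal.ofReal (C ^ p / (1 - p))) :=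
          mul_le_mul_right (add_le_add bound1 bound2) _
      _ = ENNReal.ofReal (C ^ p / (1 - p)) := by
          rw [← ENNReal.ofReal_add (by positivity) (by positivity),
            ← ENNReal.ofReal_mul hp0.le]
          congr 1
          field_simp
          ring
  have hmp : AEStronglyMeasurable (fun ω => M ω ^ p) μ :=
    ((Real.continuous_rpow_const hp0.le).measurable.comp hMmeas).aestronglyMeasurable
  rw [integral_eq_lintegral_of_nonneg_ae
    (ae_of_all _ fun ω => Real.rpow_nonneg (hMnn ω) p) hmp]
  exact ENNReal.toReal_le_of_le_ofReal (by positivity) lfin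
end
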